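/- Let p be an odd prime and k a field of characteristic p. Define P = Σ_{i+j+l = p, i,j,l ≠ p} ((p-1)!/(i! j! l!)) (x_1x_2)^i (x_3x_4)^j (x_5x_6)^l in k[x_1,...,x_6] (the binomial coefficients interpreted via lifting to the integers). Then P does not belong to the ideal (x_1x_2 + x_3x_4 + x_5x_6, x_1^p, ..., x_6^p). -/

import Mathlib

open Finset MvPolynomial

namespace PQuadricAux

variable {p : ℕ} {k : Type*} [Field k] [CharP k p]

lemma wilsonK (hp : p.Prime) : (((p - 1).factorial : ℕ) : k) = -1 := by
  haveI := Fact.mk hp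
  have h := ZMod.wilsons_lemma p
  calc (((p - 1).factorial : ℕ) : k)
      = (ZMod.castHom (dvd_refl p) k) (((p - 1).factorial : ℕ) : ZMod p) := by
        rw [map_natCast]
    _ = -1 := by rw [h, map_neg, map_one]

lemma cast_ne_zero_of_not_dvd {m : ℕ} (h : ¬ p ∣ m) : (m : k) ≠ 0 := by
  rw [Ne, CharP.cast_eq_zero_iff k p]
  exact h

lemma factorial_mul_factorial (hp : p.Prime) :
    ∀ j, j ≤ p - 1 → ((j.factorial * (p - 1 - j).factorial : ℕ) : k) = (-1) ^ (j + 1) := by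
  intro j
  induction j with
  | zero => intro _; simp [wilsonK hp]
  | succ j ih =>
    intro hj1
    have hj : j ≤ p - 1 := by omega
    have hp2 := hp.two_le
    have e1 : p - 1 - j = (p - 1 - (j + 1)) + 1 := by omega
    have key : (j + 1).factorial * (p - 1 - (j + 1)).factorial * (p - 1 - j) =
        (j + 1) * (j.factorial * (p - 1 - j).factorial) := by
      rw [e1, Nat.factorial_succ (p - 1 - (j+1)), Nat.factorial_succ j]
      ring_nf
    have hcast : ((p - 1 - j : ℕ) : k) = -((j : k) + 1) := by
      have hsum : (p - 1 - j) + (j + 1) = p := by omega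
      have h2 := congrArg (Nat.cast : ℕ → k) hsum
      push_cast at h2
      have hp0 : ((p : ℕ) : k) = 0 := CharP.cast_eq_zero k p
      rw [hp0] at h2
      linear_combination h2
    have hkey := congrArg (Nat.cast : ℕ → k) key
    push_cast at hkey
    have ih' := ih hj
    push_cast at ih'
    rw [hcast, ih'] at hkey
    have ha : ((j : k) + 1) ≠ 0 := by
      have : ¬ p ∣ (j + 1) := by
        intro hd
        have := Nat.le_of_dvd (by omega) hd
        omega
      have h0 := cast_ne_zero_of_not_dvd (p := p) (k := k) this
      push_cast at h0
      exact h0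
    push_cast
    apply mul_left_cancel₀ (neg_ne_zero.mpr ha)
    rw [show (-1 : k) ^ (j + 1 + 1) = -(-1 : k)^(j+1) by ring]
    linear_combination hkey

-- divisibility: i!j!l! divides (p-1)! when i+j+l = p, all < p
lemma fac_dvd (hp : p.Prime) {i j l : ℕ} (hsum : i + j + l = p)
    (hi : i < p) (hj : j < p) (hl : l < p) :
    (i.factorial * j.factorial * l.factorial) * ((p-1).factorial /
      (i.factorial * j.factorial * l.factorial)) = (p-1).factorial := by
  have h1 : i.factorial * j.factorial * l.factorial ∣ p.factorial := by
    have := Nat.prod_factorial_dvd_factorial_sum (univ : Finset (Fin 3)) ![i, j, l]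
    rw [Fin.prod_univ_three, Fin.sum_univ_three] at this
    simpa [hsum] using this
  have hnd : ¬ p ∣ i.factorial * j.factorial * l.factorial := by
    intro hd
    rcases (Nat.Prime.dvd_mul hp).mp hd with h | h
    · rcases (Nat.Prime.dvd_mul hp).mp h with h' | h'
      · exact absurd ((Nat.Prime.dvd_factorial hp).mp h') (by omega)
      · exact absurd ((Nat.Prime.dvd_factorial hp).mp h') (by omega)
    · exact absurd ((Nat.Prime.dvd_factorial hp).mp h) (by omega)
  have hcop : Nat.Coprime (i.factorial * j.factorial * l.factorial) p :=
    (Nat.coprime_comm.mp ((Nat.Prime.coprime_iff_not_dvd hp).mpr hnd))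
  have h2 : i.factorial * j.factorial * l.factorial ∣ (p-1).factorial := by
    have hp' : p * (p-1).factorial = p.factorial := Nat.mul_factorial_pred hp.ne_zero
    exact hcop.dvd_of_dvd_mul_left (by rw [hp']; exact h1)
  exact Nat.mul_div_cancel' h2

lemma castN (hp : p.Prime) {i j l : ℕ} (hsum : i + j + l = p)
    (hi : i < p) (hj : j < p) (hl : l < p) :
    ((i.factorial * j.factorial * l.factorial : ℕ) : k) *
      (((p-1).factorial / (i.factorial * j.factorial * l.factorial) : ℕ) : k) = -1 := by
  have h := congrArg (Nat.cast : ℕ → k) (fac_dvd hp hsum hi hj hl)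
  rw [Nat.cast_mul] at h
  rw [h, wilsonK hp]

lemma castM (hp : p.Prime) (s : Fin 3 → ℕ) (hs : s 0 + s 1 + s 2 = p - 1) :
    (((s 0).factorial * (s 1).factorial * (s 2).factorial : ℕ) : k) *
      ((Nat.multinomial univ s : ℕ) : k) = -1 := by
  have h := Nat.multinomial_spec (univ : Finset (Fin 3)) s
  rw [Fin.prod_univ_three, Fin.sum_univ_three, hs] at h
  have h2 := congrArg (Nat.cast : ℕ → k) h
  rw [Nat.cast_mul] at h2
  rw [h2, wilsonK hp]

-- value for the t0 = 0 branch:  t = ![0, j+1, p-1-j],  s = ![1, p-2-j, j]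
lemma valInl (hp : p.Prime) (hp3 : 3 ≤ p) {j : ℕ} (hj : j < p - 1) {s : Fin 3 → ℕ}
    (hs0 : s 0 = 1) (hs1 : s 1 = p-2-j) (hs2 : s 2 = j) :
    (((p-1).factorial / ((0:ℕ).factorial * (j+1).factorial * (p-1-j).factorial) : ℕ) : k) *
      ((Nat.multinomial univ s : ℕ) : k) = -1 := by
  set N : ℕ := (p-1).factorial / ((0:ℕ).factorial * (j+1).factorial * (p-1-j).factorial) with hN
  set M : ℕ := Nat.multinomial univ s with hM
  have h1 : (((0:ℕ).factorial * (j+1).factorial * (p-1-j).factorial : ℕ) : k) * (N : k) = -1 :=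
    castN hp (by omega) (by omega) (by omega) (by omega)
  have h2 : (((1:ℕ).factorial * (p-2-j).factorial * j.factorial : ℕ) : k) * (M : k) = -1 := by
    have := castM (k := k) hp s (by omega)
    rw [hs0, hs1, hs2] at this
    exact this
  -- product of denominators is -1
  have hAB : (((0:ℕ).factorial * (j+1).factorial * (p-1-j).factorial : ℕ) : k) *
      (((1:ℕ).factorial * (p-2-j).factorial * j.factorial : ℕ) : k) = -1 := by
    have f1 := factorial_mul_factorial (k := k) hp (j+1) (by omega)
    have f2 := factorial_mul_factorial (k := k) hp j (by omega)
    have e2 : p - 1 - (j+1) = p - 2 - j := by omega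
    rw [e2] at f1
    push_cast
    push_cast at f1 f2
    calc ((0:ℕ).factorial : k) * ((j+1).factorial : k) * ((p-1-j).factorial : k) *
          (((1:ℕ).factorial : k) * ((p-2-j).factorial : k) * (j.factorial : k))
        = (((j+1).factorial : k) * ((p-2-j).factorial : k)) *
          ((j.factorial : k) * ((p-1-j).factorial : k)) := by
          simp only [Nat.factorial_zero, Nat.factorial_one, Nat.cast_one]; ring
      _ = (-1)^(j+1+1) * (-1)^(j+1) := by rw [f1, f2]
      _ = -1 := by rw [← pow_add]; exact Odd.neg_one_pow ⟨j+1, by ring⟩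
  have h4 : ((((0:ℕ).factorial * (j+1).factorial * (p-1-j).factorial : ℕ) : k) *
      (((1:ℕ).factorial * (p-2-j).factorial * j.factorial : ℕ) : k)) * ((N:k) * (M:k)) = 1 := by
    calc _ = ((((0:ℕ).factorial * (j+1).factorial * (p-1-j).factorial : ℕ) : k) * (N:k)) *
        ((((1:ℕ).factorial * (p-2-j).factorial * j.factorial : ℕ) : k) * (M:k)) := by ring
      _ = (-1) * (-1) := by rw [h1, h2]
      _ = 1 := by ring
  rw [hAB] at h4
  linear_combination -h4

-- value for the t0 = 1 branch:  t = ![1, j, p-1-j],  s = ![0, p-1-j, j]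
lemma valInr (hp : p.Prime) (hp3 : 3 ≤ p) {j : ℕ} (hj : j < p) {s : Fin 3 → ℕ}
    (hs0 : s 0 = 0) (hs1 : s 1 = p-1-j) (hs2 : s 2 = j) :
    (((p-1).factorial / ((1:ℕ).factorial * j.factorial * (p-1-j).factorial) : ℕ) : k) *
      ((Nat.multinomial univ s : ℕ) : k) = 1 := by
  set N : ℕ := (p-1).factorial / ((1:ℕ).factorial * j.factorial * (p-1-j).factorial) with hN
  set M : ℕ := Nat.multinomial univ s with hM
  have h1 : (((1:ℕ).factorial * j.factorial * (p-1-j).factorial : ℕ) : k) * (N : k) = -1 :=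
    castN hp (by omega) (by omega) (by omega) (by omega)
  have h2 : (((0:ℕ).factorial * (p-1-j).factorial * j.factorial : ℕ) : k) * (M : k) = -1 := by
    have := castM (k := k) hp s (by omega)
    rw [hs0, hs1, hs2] at this
    exact this
  have f2 := factorial_mul_factorial (k := k) hp j (by omega)
  push_cast at f2
  have hAB : (((1:ℕ).factorial * j.factorial * (p-1-j).factorial : ℕ) : k) *
      (((0:ℕ).factorial * (p-1-j).factorial * j.factorial : ℕ) : k) = 1 := by
    push_cast
    calc ((1:ℕ).factorial : k) * (j.factorial : k) * ((p-1-j).factorial : k) *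
          (((0:ℕ).factorial : k) * ((p-1-j).factorial : k) * (j.factorial : k))
        = ((j.factorial : k) * ((p-1-j).factorial : k)) *
          ((j.factorial : k) * ((p-1-j).factorial : k)) := by
          simp only [Nat.factorial_zero, Nat.factorial_one, Nat.cast_one]; ring
      _ = (-1)^(j+1) * (-1)^(j+1) := by rw [f2]
      _ = 1 := by rw [← pow_add]; exact Even.neg_one_pow ⟨j+1, by ring⟩
  have h4 : ((((1:ℕ).factorial * j.factorial * (p-1-j).factorial : ℕ) : k) *
      (((0:ℕ).factorial * (p-1-j).factorial * j.factorial : ℕ) : k)) * ((N:k) * (M:k)) = 1 := by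
    calc _ = ((((1:ℕ).factorial * j.factorial * (p-1-j).factorial : ℕ) : k) * (N:k)) *
        ((((0:ℕ).factorial * (p-1-j).factorial * j.factorial : ℕ) : k) * (M:k)) := by ring
      _ = (-1) * (-1) := by rw [h1, h2]
      _ = 1 := by ring
  rw [hAB, one_mul] at h4
  exact h4

noncomputable def EE (a b c : ℕ) : Fin 6 →₀ ℕ :=
  Finsupp.single 0 a + Finsupp.single 1 a + Finsupp.single 2 b + Finsupp.single 3 b +
  Finsupp.single 4 c + Finsupp.single 5 c

lemma EE_const_apply (n : ℕ) (i : Fin 6) : EE n n n i = n := by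
  fin_cases i <;> simp [EE, Finsupp.single_apply]

variable {k : Type*} [CommSemiring k]

lemma mon_eq (a b c : ℕ) :
    ((X 0 * X 1) ^ a * (X 2 * X 3) ^ b * (X 4 * X 5) ^ c : MvPolynomial (Fin 6) k) =
      monomial (EE a b c) 1 := by
  simp only [mul_pow, X_pow_eq_monomial, monomial_mul, one_mul, EE]
  congr 1
  abel

lemma EE_inj {a b c a' b' c' : ℕ} (h : EE a b c = EE a' b' c') : a = a' ∧ b = b' ∧ c = c' := by
  have h0 := DFunLike.congr_fun h (0 : Fin 6)
  have h2 := DFunLike.congr_fun h (2 : Fin 6)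
  have h4 := DFunLike.congr_fun h (4 : Fin 6)
  simp [EE, Finsupp.single_apply] at h0 h2 h4
  exact ⟨h0, h2, h4⟩

lemma coeff_term (p : ℕ) (r : k) (a b c : ℕ) :
    coeff (EE (p-1) (p-1) (p-1))
      (C r * ((X 0 * X 1) ^ a * (X 2 * X 3) ^ b * (X 4 * X 5) ^ c)) =
      if a = p-1 ∧ b = p-1 ∧ c = p-1 then r else 0 := by
  rw [mon_eq, C_mul_monomial, mul_one, coeff_monomial]
  by_cases h : a = p-1 ∧ b = p-1 ∧ c = p-1
  · obtain ⟨rfl, rfl, rfl⟩ := h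
    simp
  · rw [if_neg h, if_neg]
    intro he
    exact h (EE_inj he)

lemma coeff_mul_Xp (p : ℕ) (hp : 0 < p) (g : MvPolynomial (Fin 6) k) (i : Fin 6) :
    coeff (EE (p-1) (p-1) (p-1)) (g * X i ^ p) = 0 := by
  rw [X_pow_eq_monomial, coeff_mul_monomial', if_neg]
  intro hle
  have h1 := hle i
  rw [Finsupp.single_eq_same] at h1
  rw [EE_const_apply] at h1
  omega

section Field
variable {p : ℕ} {k2 : Type*} [Field k2] [CharP k2 p]

lemma ideal_coeff_zero (hp : p.Prime)
    (f : MvPolynomial (Fin 6) k2)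
    (hf : f ∈ Ideal.span {(X 0 * X 1 + X 2 * X 3 + X 4 * X 5 : MvPolynomial (Fin 6) k2),
        (X 0 : MvPolynomial (Fin 6) k2) ^ p, (X 1 : MvPolynomial (Fin 6) k2) ^ p,
        (X 2 : MvPolynomial (Fin 6) k2) ^ p, (X 3 : MvPolynomial (Fin 6) k2) ^ p,
        (X 4 : MvPolynomial (Fin 6) k2) ^ p, (X 5 : MvPolynomial (Fin 6) k2) ^ p}) :
    ∀ g : MvPolynomial (Fin 6) k2,
      coeff (EE (p-1) (p-1) (p-1))
        (g * (f * ((X 0 * X 1 + X 2 * X 3 + X 4 * X 5) ^ (p-1) * (X 0 * X 1) ^ (p-2)))) = 0 := by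
  haveI := Fact.mk hp
  induction hf using Submodule.span_induction with
  | mem x hx =>
    intro g
    set q : MvPolynomial (Fin 6) k2 := X 0 * X 1 + X 2 * X 3 + X 4 * X 5 with hq
    have hqp : q ^ p = X 0 ^ p * X 1 ^ p + X 2 ^ p * X 3 ^ p + X 4 ^ p * X 5 ^ p := by
      rw [hq, add_pow_char, add_pow_char, mul_pow, mul_pow, mul_pow]
    simp only [Set.mem_insert_iff, Set.mem_singleton_iff] at hx
    rcases hx with rfl | rfl | rfl | rfl | rfl | rfl | rfl
    · have he : g * (q * (q ^ (p-1) * (X 0 * X 1) ^ (p-2))) =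
          g * (X 0 * X 1) ^ (p-2) * q ^ p := by
        rw [show q ^ p = q * q ^ (p - 1) by
          rw [← pow_succ']
          congr 1
          have := hp.two_le
          omega]
        ring
      rw [he, hqp]
      rw [mul_add, mul_add]
      rw [coeff_add, coeff_add]
      rw [show g * (X 0 * X 1) ^ (p-2) * (X 0 ^ p * X 1 ^ p) =
          (g * (X 0 * X 1) ^ (p-2) * X 1 ^ p) * X 0 ^ p by ring]
      rw [show g * (X 0 * X 1) ^ (p-2) * (X 2 ^ p * X 3 ^ p) =
          (g * (X 0 * X 1) ^ (p-2) * X 3 ^ p) * X 2 ^ p by ring]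
      rw [show g * (X 0 * X 1) ^ (p-2) * (X 4 ^ p * X 5 ^ p) =
          (g * (X 0 * X 1) ^ (p-2) * X 5 ^ p) * X 4 ^ p by ring]
      rw [coeff_mul_Xp p hp.pos, coeff_mul_Xp p hp.pos, coeff_mul_Xp p hp.pos]
      ring
    · have e : g * (X 0 ^ p * (q ^ (p-1) * (X 0 * X 1) ^ (p-2))) =
          (g * (q ^ (p-1) * (X 0 * X 1) ^ (p-2))) * X 0 ^ p := by ring
      rw [e]; exact coeff_mul_Xp p hp.pos _ _
    · have e : g * (X 1 ^ p * (q ^ (p-1) * (X 0 * X 1) ^ (p-2))) =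
          (g * (q ^ (p-1) * (X 0 * X 1) ^ (p-2))) * X 1 ^ p := by ring
      rw [e]; exact coeff_mul_Xp p hp.pos _ _
    · have e : g * (X 2 ^ p * (q ^ (p-1) * (X 0 * X 1) ^ (p-2))) =
          (g * (q ^ (p-1) * (X 0 * X 1) ^ (p-2))) * X 2 ^ p := by ring
      rw [e]; exact coeff_mul_Xp p hp.pos _ _
    · have e : g * (X 3 ^ p * (q ^ (p-1) * (X 0 * X 1) ^ (p-2))) =
          (g * (q ^ (p-1) * (X 0 * X 1) ^ (p-2))) * X 3 ^ p := by ring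
      rw [e]; exact coeff_mul_Xp p hp.pos _ _
    · have e : g * (X 4 ^ p * (q ^ (p-1) * (X 0 * X 1) ^ (p-2))) =
          (g * (q ^ (p-1) * (X 0 * X 1) ^ (p-2))) * X 4 ^ p := by ring
      rw [e]; exact coeff_mul_Xp p hp.pos _ _
    · have e : g * (X 5 ^ p * (q ^ (p-1) * (X 0 * X 1) ^ (p-2))) =
          (g * (q ^ (p-1) * (X 0 * X 1) ^ (p-2))) * X 5 ^ p := by ring
      rw [e]; exact coeff_mul_Xp p hp.pos _ _
  | zero => intro g; simp
  | add x y _ _ hx hy =>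
    intro g
    rw [add_mul, mul_add, coeff_add, hx g, hy g]
    ring
  | smul r x _ hx =>
    intro g
    rw [smul_eq_mul]
    have e : g * (r * x * ((X 0 * X 1 + X 2 * X 3 + X 4 * X 5) ^ (p-1) * (X 0 * X 1) ^ (p-2))) =
        (g * r) * (x * ((X 0 * X 1 + X 2 * X 3 + X 4 * X 5) ^ (p-1) * (X 0 * X 1) ^ (p-2))) := by
      ring
    rw [e]
    exact hx (g * r)

end Field
section Main
variable {p : ℕ} {k2 : Type*} [Field k2] [CharP k2 p]

lemma coeff_P_one (hp : p.Prime) (hodd : p ≠ 2) :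
    coeff (EE (p-1) (p-1) (p-1))
      ((∑ t ∈ (Finset.Nat.antidiagonalTuple 3 p).filter (fun t => ∀ m : Fin 3, t m ≠ p),
          C ((((p - 1).factorial /
            ((t 0).factorial * (t 1).factorial * (t 2).factorial) : ℕ)) : k2) *
            (X 0 * X 1) ^ (t 0) * (X 2 * X 3) ^ (t 1) * (X 4 * X 5) ^ (t 2)) *
        ((X 0 * X 1 + X 2 * X 3 + X 4 * X 5) ^ (p-1) * (X 0 * X 1) ^ (p-2))) = 1 := by
  classical
  have hp2 := hp.two_le
  have hp3 : 3 ≤ p := by omega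
  set A := (Finset.Nat.antidiagonalTuple 3 p).filter (fun t => ∀ m : Fin 3, t m ≠ p) with hA
  set B := piAntidiag (univ : Finset (Fin 3)) (p-1) with hB
  have hq : ((X 0 * X 1 + X 2 * X 3 + X 4 * X 5 : MvPolynomial (Fin 6) k2)) ^ (p-1) =
      ∑ s ∈ B, (Nat.multinomial univ s : MvPolynomial (Fin 6) k2) *
        ((X 0 * X 1) ^ (s 0) * ((X 2 * X 3) ^ (s 1) * (X 4 * X 5) ^ (s 2))) := by
    have h := Finset.sum_pow_eq_sum_piAntidiag (univ : Finset (Fin 3))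
      ![(X 0 * X 1 : MvPolynomial (Fin 6) k2), X 2 * X 3, X 4 * X 5] (p-1)
    rw [Fin.sum_univ_three] at h
    simp only [Matrix.cons_val_zero, Matrix.cons_val_one, Matrix.head_cons,
      Matrix.cons_val_two, Matrix.tail_cons] at h
    rw [h]
    refine Finset.sum_congr rfl fun s hs => ?_
    rw [Fin.prod_univ_three]
    simp only [Matrix.cons_val_zero, Matrix.cons_val_one, Matrix.head_cons,
      Matrix.cons_val_two, Matrix.tail_cons]
    ring
  have expand : (∑ t ∈ A,
        C ((((p - 1).factorial /
          ((t 0).factorial * (t 1).factorial * (t 2).factorial) : ℕ)) : k2) *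
          (X 0 * X 1) ^ (t 0) * (X 2 * X 3) ^ (t 1) * (X 4 * X 5) ^ (t 2)) *
      ((X 0 * X 1 + X 2 * X 3 + X 4 * X 5) ^ (p-1) * (X 0 * X 1) ^ (p-2)) =
      ∑ t ∈ A, ∑ s ∈ B,
        (C ((((p - 1).factorial /
          ((t 0).factorial * (t 1).factorial * (t 2).factorial) : ℕ)) : k2) *
          (X 0 * X 1) ^ (t 0) * (X 2 * X 3) ^ (t 1) * (X 4 * X 5) ^ (t 2)) *
        (((Nat.multinomial univ s : MvPolynomial (Fin 6) k2) *
          ((X 0 * X 1) ^ (s 0) * ((X 2 * X 3) ^ (s 1) * (X 4 * X 5) ^ (s 2)))) *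
          (X 0 * X 1) ^ (p-2)) := by
    rw [hq, Finset.sum_mul]
    refine Finset.sum_congr rfl fun t _ => ?_
    rw [Finset.sum_mul, Finset.mul_sum]
  rw [expand]
  simp only [coeff_sum]
  have hterm : ∀ t ∈ A, ∀ s ∈ B,
      coeff (EE (p-1) (p-1) (p-1))
        ((C ((((p - 1).factorial /
          ((t 0).factorial * (t 1).factorial * (t 2).factorial) : ℕ)) : k2) *
          (X 0 * X 1) ^ (t 0) * (X 2 * X 3) ^ (t 1) * (X 4 * X 5) ^ (t 2)) *
        (((Nat.multinomial univ s : MvPolynomial (Fin 6) k2) *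
          ((X 0 * X 1) ^ (s 0) * ((X 2 * X 3) ^ (s 1) * (X 4 * X 5) ^ (s 2)))) *
          (X 0 * X 1) ^ (p-2))) =
      if t 0 + s 0 + (p-2) = p-1 ∧ t 1 + s 1 = p-1 ∧ t 2 + s 2 = p-1 then
        ((((p - 1).factorial /
          ((t 0).factorial * (t 1).factorial * (t 2).factorial) : ℕ)) : k2) *
          ((Nat.multinomial univ s : ℕ) : k2) else 0 := by
    intro t _ s _
    have e : (C ((((p - 1).factorial /
          ((t 0).factorial * (t 1).factorial * (t 2).factorial) : ℕ)) : k2) *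
          (X 0 * X 1) ^ (t 0) * (X 2 * X 3) ^ (t 1) * (X 4 * X 5) ^ (t 2)) *
        (((Nat.multinomial univ s : MvPolynomial (Fin 6) k2) *
          ((X 0 * X 1) ^ (s 0) * ((X 2 * X 3) ^ (s 1) * (X 4 * X 5) ^ (s 2)))) *
          (X 0 * X 1) ^ (p-2)) =
        C (((((p - 1).factorial /
          ((t 0).factorial * (t 1).factorial * (t 2).factorial) : ℕ)) : k2) *
          ((Nat.multinomial univ s : ℕ) : k2)) *
        ((X 0 * X 1) ^ (t 0 + s 0 + (p-2)) * (X 2 * X 3) ^ (t 1 + s 1) *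
          (X 4 * X 5) ^ (t 2 + s 2)) := by
      rw [map_mul, ← C_eq_coe_nat]
      ring
    rw [e, coeff_term]
  rw [Finset.sum_congr rfl fun t ht => Finset.sum_congr rfl fun s hs => hterm t ht s hs]
  rw [← Finset.sum_product']
  rw [← Finset.sum_filter]
  refine Eq.trans (Finset.sum_nbij'
      (t := (range (p-1)).disjSum (range p))
      (g := Sum.elim (fun _ => (-1:k2)) fun _ => (1:k2))
      (i := fun z => if z.1 0 = 0 then Sum.inl (z.1 1 - 1) else Sum.inr (z.1 1))
      (j := Sum.elim (fun j => (![0, j+1, p-1-j], ![1, p-2-j, j]))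
        (fun j => (![1, j, p-1-j], ![0, p-1-j, j])))
      ?_ ?_ ?_ ?_ ?_) ?_
  ·
    intro z hz
    simp only [mem_filter, mem_product, hA, hB, Finset.Nat.mem_antidiagonalTuple,
      Fin.sum_univ_three, mem_piAntidiag] at hz
    obtain ⟨⟨⟨ht, htne⟩, hs, -⟩, hc1, hc2, hc3⟩ := hz
    have h1 := htne 1
    have h2 := htne 2
    by_cases hz0 : z.1 0 = 0
    · show (if z.1 0 = 0 then Sum.inl (z.1 1 - 1) else Sum.inr (z.1 1)) ∈ _
      rw [if_pos hz0, Finset.inl_mem_disjSum, Finset.mem_range]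
      omega
    · show (if z.1 0 = 0 then Sum.inl (z.1 1 - 1) else Sum.inr (z.1 1)) ∈ _
      rw [if_neg hz0, Finset.inr_mem_disjSum, Finset.mem_range]
      omega
  ·
    intro x hx
    rcases x with j | j
    · rw [Finset.inl_mem_disjSum, Finset.mem_range] at hx
      simp only [mem_filter, mem_product, hA, hB, Finset.Nat.mem_antidiagonalTuple,
        Fin.sum_univ_three, mem_piAntidiag, Sum.elim_inl]
      refine ⟨⟨⟨?_, ?_⟩, ?_, ?_⟩, ?_, ?_, ?_⟩
      · simp; omega
      · intro m; fin_cases m <;> simp <;> omega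
      · simp; omega
      · intro i _; exact mem_univ i
      · simp; omega
      · simp; omega
      · simp; omega
    · rw [Finset.inr_mem_disjSum, Finset.mem_range] at hx
      simp only [mem_filter, mem_product, hA, hB, Finset.Nat.mem_antidiagonalTuple,
        Fin.sum_univ_three, mem_piAntidiag, Sum.elim_inr]
      refine ⟨⟨⟨?_, ?_⟩, ?_, ?_⟩, ?_, ?_, ?_⟩
      · simp; omega
      · intro m; fin_cases m <;> simp <;> omega
      · simp; omega
      · intro i _; exact mem_univ i
      · simp; omega
      · simp; omega
      · simp; omega
  ·
    intro z hz
    simp only [mem_filter, mem_product, hA, hB, Finset.Nat.mem_antidiagonalTuple,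
      Fin.sum_univ_three, mem_piAntidiag] at hz
    obtain ⟨⟨⟨ht, htne⟩, hs, -⟩, hc1, hc2, hc3⟩ := hz
    have h1 := htne 1
    have h2 := htne 2
    show Sum.elim _ _ (if z.1 0 = 0 then Sum.inl (z.1 1 - 1) else Sum.inr (z.1 1)) = z
    by_cases hz0 : z.1 0 = 0
    · rw [if_pos hz0]
      simp only [Sum.elim_inl]
      refine Prod.ext ?_ ?_ <;> funext i <;> fin_cases i <;> simp <;> omega
    · rw [if_neg hz0]
      simp only [Sum.elim_inr]
      refine Prod.ext ?_ ?_ <;> funext i <;> fin_cases i <;> simp <;> omega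
  ·
    intro x hx
    rcases x with j | j
    · simp
    · simp
  ·
    intro z hz
    simp only [mem_filter, mem_product, hA, hB, Finset.Nat.mem_antidiagonalTuple,
      Fin.sum_univ_three, mem_piAntidiag] at hz
    obtain ⟨⟨⟨ht, htne⟩, hs, -⟩, hc1, hc2, hc3⟩ := hz
    have h1 := htne 1
    have h2 := htne 2
    show _ = Sum.elim _ _ (if z.1 0 = 0 then Sum.inl (z.1 1 - 1) else Sum.inr (z.1 1))
    by_cases hz0 : z.1 0 = 0
    · rw [if_pos hz0, Sum.elim_inl]
      set j := z.1 1 - 1 with hjdef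
      have hj : j < p - 1 := by omega
      rw [show z.1 0 = 0 from hz0, show z.1 1 = j + 1 by omega, show z.1 2 = p-1-j by omega]
      exact valInl hp hp3 hj (by omega) (by omega) (by omega)
    · rw [if_neg hz0, Sum.elim_inr]
      set j := z.1 1 with hjdef
      have hj : j < p := by omega
      rw [show z.1 0 = 1 by omega, show z.1 2 = p-1-j by omega]
      exact valInr hp hp3 hj (by omega) (by omega) (by omega)
  rw [Finset.sum_sumElim]
  rw [Finset.sum_const, Finset.sum_const, Finset.card_range, Finset.card_range,
    nsmul_eq_mul, nsmul_eq_mul, mul_one]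
  have hpk : ((p : ℕ) : k2) = 0 := CharP.cast_eq_zero k2 p
  have hpm1 : ((p - 1 : ℕ) : k2) = -1 := by
    rw [Nat.cast_sub hp.one_le, hpk, Nat.cast_one, zero_sub]
  rw [hpm1, hpk]
  ring
end Main

end PQuadricAux

open MvPolynomial in
/-- For `p` an odd prime and `k` a field of characteristic `p`, the polynomial
`P = Σ_{i+j+l = p, i,j,l ≠ p} ((p-1)!/(i!j!l!)) (x₁x₂)^i (x₃x₄)^j (x₅x₆)^l`
does not belong to the ideal `(x₁x₂ + x₃x₄ + x₅x₆, x₁^p, …, x₆^p)`. -/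
theorem P_not_mem_quadric_ideal
    (p : ℕ) (hp : p.Prime) (hodd : p ≠ 2) (k : Type*) [Field k] [CharP k p] :
    (∑ t ∈ (Finset.Nat.antidiagonalTuple 3 p).filter (fun t => ∀ m : Fin 3, t m ≠ p),
        (C ((((p - 1).factorial /
          ((t 0).factorial * (t 1).factorial * (t 2).factorial) : ℕ)) : k)) *
          (X 0 * X 1) ^ (t 0) * (X 2 * X 3) ^ (t 1) * (X 4 * X 5) ^ (t 2)
        : MvPolynomial (Fin 6) k) ∉
      Ideal.span {(X 0 * X 1 + X 2 * X 3 + X 4 * X 5 : MvPolynomial (Fin 6) k),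
        (X 0 : MvPolynomial (Fin 6) k) ^ p, (X 1 : MvPolynomial (Fin 6) k) ^ p,
        (X 2 : MvPolynomial (Fin 6) k) ^ p, (X 3 : MvPolynomial (Fin 6) k) ^ p,
        (X 4 : MvPolynomial (Fin 6) k) ^ p, (X 5 : MvPolynomial (Fin 6) k) ^ p} := by
  intro hmem
  have hz := PQuadricAux.ideal_coeff_zero hp _ hmem 1
  rw [one_mul] at hz
  have h1 := PQuadricAux.coeff_P_one (k2 := k) hp hodd
  rw [hz] at h1
  exact zero_ne_one h1
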